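/- Assume the balanced case n₁ = n₂ = n/2. Then Z* ∈ M_opt⁺. Let G be a real symmetric n×n matrix (playing the role of YYᵀ) and let Ẑ ∈ M_opt⁺ satisfy ⟨G, Ẑ⟩ ≥ ⟨G, Z⟩ for all Z ∈ M_opt⁺. Then ⟨Ẑ, I_n⟩ = ⟨Z*, I_n⟩ = n, ⟨Ẑ, E_n⟩ = ⟨Z*, E_n⟩ = 0, and (pγ/4)·‖Ẑ − Z*‖₁ ≤ ⟨R, Z* − Ẑ⟩ ≤ ⟨G − Ḡ, Ẑ − Z*⟩. -/

import Mathlib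

open Matrix Finset

noncomputable section

def opNorm {k l : ℕ} (A : Matrix (Fin k) (Fin l) ℝ) : ℝ :=
  ‖(Matrix.toEuclideanLin A).toContinuousLinearMap‖

def ip {n : ℕ} (A B : Matrix (Fin n) (Fin n) ℝ) : ℝ := Matrix.trace (Aᵀ * B)

def ell1Norm {k l : ℕ} (M : Matrix (Fin k) (Fin l) ℝ) : ℝ := ∑ i, ∑ j, |M i j|

def frobNorm {k l : ℕ} (M : Matrix (Fin k) (Fin l) ℝ) : ℝ :=
  Real.sqrt (∑ i, ∑ j, (M i j) ^ 2)

def euclNorm {k : ℕ} (x : Fin k → ℝ) : ℝ := Real.sqrt (∑ i, x i ^ 2)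

def En (n : ℕ) : Matrix (Fin n) (Fin n) ℝ := Matrix.of fun _ _ => 1

def centering (n : ℕ) : Matrix (Fin n) (Fin n) ℝ := 1 - ((n : ℝ)⁻¹) • En n

def Mopt (n : ℕ) : Set (Matrix (Fin n) (Fin n) ℝ) :=
  {Z | Z.PosSemidef ∧ ∀ i, Z i i = 1}

def MGplus (n : ℕ) : Set (Matrix (Fin n) (Fin n) ℝ) :=
  {Z | Z.PosSemidef ∧ ∀ i, Z i i ≤ 1}

def MoptPlus (n : ℕ) : Set (Matrix (Fin n) (Fin n) ℝ) :=
  {Z | Z.PosSemidef ∧ (∀ i, Z i i = 1) ∧ ip (En n) Z = 0}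

def u2 (n n₁ : ℕ) : Fin n → ℝ := fun j => if (j : ℕ) < n₁ then 1 else -1

def Zstar (n n₁ : ℕ) : Matrix (Fin n) (Fin n) ℝ :=
  Matrix.vecMulVec (u2 n n₁) (u2 n n₁)

def wmin (n n₁ n₂ : ℕ) : ℝ := min ((n₁ : ℝ) / n) ((n₂ : ℝ) / n)

def vref (n n₁ n₂ : ℕ) : Fin n → ℝ :=
  fun j => if (j : ℕ) < n₁ then (n₂ : ℝ) / n else -((n₁ : ℝ) / n)

def Rmat (n n₁ n₂ p : ℕ) (γ : ℝ) : Matrix (Fin n) (Fin n) ℝ :=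
  ((p : ℝ) * γ) • Matrix.vecMulVec (vref n n₁ n₂) (vref n n₁ n₂)

def Dmat (n n₁ : ℕ) (V₁ V₂ : ℝ) : Matrix (Fin n) (Fin n) ℝ :=
  Matrix.diagonal fun j => if (j : ℕ) < n₁ then V₁ else V₂

def Gbar (n n₁ n₂ p : ℕ) (γ V₁ V₂ : ℝ) : Matrix (Fin n) (Fin n) ℝ :=
  centering n * Dmat n n₁ V₁ V₂ * centering n + Rmat n n₁ n₂ p γ

def taubar (n n₁ n₂ p : ℕ) (γ V₁ V₂ : ℝ) : ℝ :=
  Matrix.trace (Gbar n n₁ n₂ p γ V₁ V₂) / n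

def lambar (n n₁ n₂ p : ℕ) (γ V₁ V₂ : ℝ) : ℝ :=
  ((∑ i, ∑ j, Gbar n n₁ n₂ p γ V₁ V₂ i j) - Matrix.trace (Gbar n n₁ n₂ p γ V₁ V₂)) /
    ((n : ℝ) * ((n : ℝ) - 1))

def Bbar (n n₁ n₂ p : ℕ) (γ V₁ V₂ : ℝ) : Matrix (Fin n) (Fin n) ℝ :=
  Gbar n n₁ n₂ p γ V₁ V₂ - lambar n n₁ n₂ p γ V₁ V₂ • (En n - 1) -
    taubar n n₁ n₂ p γ V₁ V₂ • (1 : Matrix (Fin n) (Fin n) ℝ)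

def W0 (n n₁ n₂ : ℕ) (V₁ V₂ : ℝ) : Matrix (Fin n) (Fin n) ℝ :=
  Matrix.diagonal fun j => if (j : ℕ) < n₁ then (V₁ - V₂) * ((n₂ : ℝ) / n)
    else -((V₁ - V₂) * ((n₁ : ℝ) / n))

def blockDiagE (n n₁ : ℕ) : Matrix (Fin n) (Fin n) ℝ :=
  Matrix.of fun i j =>
    if (i : ℕ) < n₁ ∧ (j : ℕ) < n₁ then 1
    else if n₁ ≤ (i : ℕ) ∧ n₁ ≤ (j : ℕ) then -1 else 0

def W2m (n n₁ : ℕ) (V₁ V₂ : ℝ) : Matrix (Fin n) (Fin n) ℝ :=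
  ((V₁ - V₂) / n) • blockDiagE n n₁

def Wbb (n n₁ n₂ : ℕ) (V₁ V₂ : ℝ) : Matrix (Fin n) (Fin n) ℝ :=
  W2m n n₁ V₁ V₂ + ((V₁ - V₂) * ((n₂ : ℝ) / n - (n₁ : ℝ) / n) / n) • En n



lemma ip_eq {n : ℕ} (A B : Matrix (Fin n) (Fin n) ℝ) :
    ip A B = ∑ i, ∑ j, A i j * B i j := by
  simp only [ip, Matrix.trace, Matrix.diag, Matrix.mul_apply, Matrix.transpose_apply]
  rw [Finset.sum_comm]

lemma ip_sub_left {n : ℕ} (A B C : Matrix (Fin n) (Fin n) ℝ) :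
    ip (A - B) C = ip A C - ip B C := by
  simp [ip_eq, Matrix.sub_apply, sub_mul, Finset.sum_sub_distrib]

lemma ip_add_left {n : ℕ} (A B C : Matrix (Fin n) (Fin n) ℝ) :
    ip (A + B) C = ip A C + ip B C := by
  simp [ip_eq, Matrix.add_apply, add_mul, Finset.sum_add_distrib]

lemma ip_sub_right {n : ℕ} (A B C : Matrix (Fin n) (Fin n) ℝ) :
    ip A (B - C) = ip A B - ip A C := by
  simp [ip_eq, Matrix.sub_apply, mul_sub, Finset.sum_sub_distrib]

lemma ip_smul_left {n : ℕ} (c : ℝ) (A B : Matrix (Fin n) (Fin n) ℝ) :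
    ip (c • A) B = c * ip A B := by
  simp [ip_eq, Matrix.smul_apply, Finset.mul_sum, mul_assoc]

lemma quad_form_aux {n : ℕ} (Z : Matrix (Fin n) (Fin n) ℝ) (i j : Fin n) (c : ℝ) :
    (fun k => (if k = i then (1:ℝ) else 0) + (if k = j then c else 0)) ⬝ᵥ
      Z *ᵥ (fun k => (if k = i then (1:ℝ) else 0) + (if k = j then c else 0)) =
    Z i i + c * Z i j + c * Z j i + c * c * Z j j := by
  simp [dotProduct, mulVec, mul_add, add_mul, Finset.sum_add_distrib, mul_ite, ite_mul,
    mul_zero, zero_mul, Finset.mul_sum, Finset.sum_ite_eq', mul_comm, mul_left_comm]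
  ring

lemma entry_bound {n : ℕ} {Z : Matrix (Fin n) (Fin n) ℝ}
    (hZ : Z.PosSemidef) (hd : ∀ i, Z i i = 1) (i j : Fin n) : |Z i j| ≤ 1 := by
  have hsym : Z j i = Z i j := by
    have h := congrFun (congrFun hZ.1 j) i
    rw [← h]; simp [Matrix.conjTranspose_apply]
  have key : ∀ c : ℝ, 0 ≤ Z i i + c * Z i j + c * Z j i + c * c * Z j j := by
    intro c
    have h := hZ.dotProduct_mulVec_nonneg (fun k => (if k = i then (1:ℝ) else 0) + (if k = j then c else 0))
    rw [show star (fun k => (if k = i then (1:ℝ) else 0) + (if k = j then c else 0)) =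
      (fun k => (if k = i then (1:ℝ) else 0) + (if k = j then c else 0)) from rfl] at h
    rw [quad_form_aux] at h
    exact_mod_cast h
  have h1 := key 1
  have h2 := key (-1)
  rw [hd i, hd j, hsym] at h1 h2
  rw [abs_le]
  constructor <;> linarith

lemma rowsum_zero {n : ℕ} {Z : Matrix (Fin n) (Fin n) ℝ} (hZ : Z ∈ MoptPlus n) :
    ∀ i, ∑ j, Z i j = 0 := by
  obtain ⟨hpsd, hd, hE⟩ := hZ
  have h0 : star (fun _ => (1:ℝ)) ⬝ᵥ Z *ᵥ (fun _ => (1:ℝ)) = 0 := by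
    rw [ip_eq] at hE
    simpa [dotProduct, mulVec, En] using hE
  have hv := (hpsd.dotProduct_mulVec_zero_iff (fun _ => 1)).mp h0
  intro i
  have := congrFun hv i
  simpa [mulVec, dotProduct] using this

lemma colsum_zero {n : ℕ} {Z : Matrix (Fin n) (Fin n) ℝ} (hZ : Z ∈ MoptPlus n) :
    ∀ j, ∑ i, Z i j = 0 := by
  intro j
  have hsym : ∀ a b, Z a b = Z b a := by
    intro a b
    have h := congrFun (congrFun hZ.1.1 a) b
    rw [← h]; simp [Matrix.conjTranspose_apply]
  simp only [fun i => hsym i j]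
  exact rowsum_zero hZ j

lemma mul_centering {n : ℕ} {Z : Matrix (Fin n) (Fin n) ℝ} (hZ : Z ∈ MoptPlus n) :
    Z * centering n = Z := by
  have hZE : Z * En n = 0 := by
    ext i j; simp [Matrix.mul_apply, En, rowsum_zero hZ i]
  simp [centering, Matrix.mul_sub, Matrix.mul_smul, hZE]

lemma centering_mul {n : ℕ} {Z : Matrix (Fin n) (Fin n) ℝ} (hZ : Z ∈ MoptPlus n) :
    centering n * Z = Z := by
  have hEZ : En n * Z = 0 := by
    ext i j; simp [Matrix.mul_apply, En, colsum_zero hZ j]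
  simp [centering, Matrix.sub_mul, Matrix.smul_mul, hEZ]

lemma ip_cdc {n n₁ : ℕ} (V₁ V₂ : ℝ) {Z : Matrix (Fin n) (Fin n) ℝ} (hZ : Z ∈ MoptPlus n) :
    ip (centering n * Dmat n n₁ V₁ V₂ * centering n) Z
      = Matrix.trace (Dmat n n₁ V₁ V₂) := by
  have hC : (centering n)ᵀ = centering n := by
    ext i j
    simp [centering, En, Matrix.one_apply, Matrix.transpose_apply, eq_comm]
  have hD : (Dmat n n₁ V₁ V₂)ᵀ = Dmat n n₁ V₁ V₂ := Matrix.diagonal_transpose _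
  rw [ip, Matrix.transpose_mul, Matrix.transpose_mul, hC, hD,
    Matrix.mul_assoc, Matrix.trace_mul_comm, Matrix.mul_assoc, mul_centering hZ,
    Matrix.mul_assoc, centering_mul hZ]
  simp only [Matrix.trace, Matrix.diag]
  apply Finset.sum_congr rfl
  intro i _
  rw [Matrix.mul_apply]
  simp [Dmat, Matrix.diagonal_apply, Finset.sum_ite_eq, hZ.2.1 i]

lemma sum_u2 {n n₁ : ℕ} (h : n = n₁ + n₁) : ∑ i : Fin n, u2 n n₁ i = 0 := by
  have h0 : ∑ i : Fin n, u2 n n₁ i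
      = ∑ i ∈ Finset.range n, (if i < n₁ then (1:ℝ) else -1) := by
    rw [Finset.sum_range fun i => _]
    rfl
  rw [h0, h, Finset.range_eq_Ico,
    ← Finset.sum_Ico_consecutive _ (Nat.zero_le n₁) (Nat.le_add_right n₁ n₁)]
  have h1 : ∑ i ∈ Finset.Ico 0 n₁, (if i < n₁ then (1:ℝ) else -1) = n₁ := by
    rw [Finset.sum_congr rfl (fun i hi => if_pos (Finset.mem_Ico.mp hi).2)]
    simp
  have h2 : ∑ i ∈ Finset.Ico n₁ (n₁ + n₁), (if i < n₁ then (1:ℝ) else -1) = -(n₁ : ℝ) := by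
    rw [Finset.sum_congr rfl (fun i hi => if_neg (not_lt.2 (Finset.mem_Ico.mp hi).1))]
    simp
  rw [h1, h2]; ring

lemma quad_zstar {n n₁ : ℕ} (x : Fin n → ℝ) :
    x ⬝ᵥ (Zstar n n₁) *ᵥ x = (∑ j, x j * u2 n n₁ j) ^ 2 := by
  rw [pow_two, Finset.sum_mul_sum]
  simp only [Zstar, Matrix.vecMulVec_apply, dotProduct, mulVec, Finset.mul_sum]
  apply Finset.sum_congr rfl
  intro i _
  apply Finset.sum_congr rfl
  intro j _
  ring

lemma zstar_psd {n n₁ : ℕ} : (Zstar n n₁).PosSemidef := by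
  refine Matrix.PosSemidef.of_dotProduct_mulVec_nonneg ?_ ?_
  · ext i j
    simp [Zstar, Matrix.vecMulVec_apply, Matrix.conjTranspose_apply, mul_comm]
  · intro x
    have hx : star x = x := rfl
    rw [hx, quad_zstar]
    positivity


/-- elementary inequality for balanced partitions and the BalancedSDP
feasible set `M_opt⁺`. -/
theorem elementary_inequality_balanced (n n₁ n₂ p : ℕ) (γ V₁ V₂ : ℝ)
    (hn : n = n₁ + n₂) (hbal : n₁ = n₂) (hn₁ : 0 < n₁) (hp : 1 ≤ p) (hγ : 0 < γ)
    (G : Matrix (Fin n) (Fin n) ℝ) (hG : Gᵀ = G)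
    (Zhat : Matrix (Fin n) (Fin n) ℝ) (hZhatMem : Zhat ∈ MoptPlus n)
    (hZhatMax : ∀ Z ∈ MoptPlus n, ip G Z ≤ ip G Zhat) :
    Zstar n n₁ ∈ MoptPlus n ∧
    ip Zhat (1 : Matrix (Fin n) (Fin n) ℝ) = (n : ℝ) ∧
    ip (Zstar n n₁) (1 : Matrix (Fin n) (Fin n) ℝ) = (n : ℝ) ∧
    ip Zhat (En n) = 0 ∧
    ip (Zstar n n₁) (En n) = 0 ∧
    ((p : ℝ) * γ / 4) * ell1Norm (Zhat - Zstar n n₁) ≤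
      ip (Rmat n n₁ n₂ p γ) (Zstar n n₁ - Zhat) ∧
    ip (Rmat n n₁ n₂ p γ) (Zstar n n₁ - Zhat) ≤
      ip (G - Gbar n n₁ n₂ p γ V₁ V₂) (Zhat - Zstar n n₁) := by
  subst hbal
  -- basic numeric facts
  have hnn : n = n₁ + n₁ := hn
  have hnpos : 0 < n := by omega
  have hn₁R : (0:ℝ) < (n₁ : ℝ) := by exact_mod_cast hn₁
  have hnR : (n : ℝ) = 2 * (n₁ : ℝ) := by rw [hnn]; push_cast; ring
  have hhalf : (n₁ : ℝ) / n = 1 / 2 := by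
    rw [hnR]; field_simp
  -- Zstar membership
  have hzdiag : ∀ i, Zstar n n₁ i i = 1 := by
    intro i
    by_cases h : (i : ℕ) < n₁ <;> simp [Zstar, Matrix.vecMulVec_apply, u2, h]
  have hzE : ip (En n) (Zstar n n₁) = 0 := by
    rw [ip_eq]
    simp only [En, Matrix.of_apply, one_mul, Zstar, Matrix.vecMulVec_apply]
    rw [← Finset.sum_mul_sum, sum_u2 hnn, mul_zero]
  have hZsMem : Zstar n n₁ ∈ MoptPlus n := ⟨zstar_psd, hzdiag, hzE⟩
  obtain ⟨hpsd, hdiag, hE⟩ := hZhatMem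
  have hmem : Zhat ∈ MoptPlus n := ⟨hpsd, hdiag, hE⟩
  -- R = (pγ/4) • Zstar
  have hv : ∀ k : Fin n, vref n n₁ n₁ k = (1 / 2) * u2 n n₁ k := by
    intro k
    by_cases hk : (k : ℕ) < n₁ <;> simp [vref, u2, hk, hhalf]
  have hR : Rmat n n₁ n₁ p γ = ((p : ℝ) * γ / 4) • Zstar n n₁ := by
    ext i j
    simp only [Rmat, Matrix.smul_apply, Matrix.vecMulVec_apply, Zstar, smul_eq_mul, hv]
    ring
  -- trace facts
  have hip1 : ∀ (W : Matrix (Fin n) (Fin n) ℝ), (∀ i, W i i = 1) →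
      ip W (1 : Matrix (Fin n) (Fin n) ℝ) = (n : ℝ) := by
    intro W hW
    rw [ip_eq]
    have : ∀ i : Fin n, ∑ j, W i j * (1 : Matrix (Fin n) (Fin n) ℝ) i j = 1 := by
      intro i
      simp [Matrix.one_apply, mul_ite, Finset.sum_ite_eq', hW i]
    simp [this, Finset.card_univ]
  have hipE : ∀ (W : Matrix (Fin n) (Fin n) ℝ), ip (En n) W = 0 → ip W (En n) = 0 := by
    intro W hW
    rw [ip_eq] at hW ⊢
    simpa [En] using hW
  refine ⟨hZsMem, hip1 Zhat hdiag, hip1 _ hzdiag, hipE Zhat hE, hipE _ hzE, ?_, ?_⟩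
  · -- first inequality
    have habs : ∀ i j, |Zhat i j| ≤ 1 := entry_bound hpsd hdiag
    have hper : ∀ i j, |Zhat i j - Zstar n n₁ i j| ≤
        Zstar n n₁ i j * (Zstar n n₁ i j - Zhat i j) := by
      intro i j
      have hz := habs i j
      rw [abs_le] at hz
      have hs : Zstar n n₁ i j = 1 ∨ Zstar n n₁ i j = -1 := by
        by_cases hi : (i : ℕ) < n₁ <;> by_cases hj : (j : ℕ) < n₁ <;>
          simp [Zstar, Matrix.vecMulVec_apply, u2, hi, hj]
      rcases hs with hs | hs <;> rw [hs]
      · rw [abs_of_nonpos (by linarith)]; linarith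
      · rw [abs_of_nonneg (by linarith)]; linarith
    rw [hR, ip_smul_left]
    apply mul_le_mul_of_nonneg_left
    · rw [ip_eq]
      simp only [ell1Norm]
      apply Finset.sum_le_sum
      intro i _
      apply Finset.sum_le_sum
      intro j _
      simpa [Matrix.sub_apply] using hper i j
    · have hp1 : (1:ℝ) ≤ (p : ℝ) := by exact_mod_cast hp
      positivity
  · -- second inequality
    have hopt := hZhatMax (Zstar n n₁) hZsMem
    have h1 := ip_cdc (n₁ := n₁) V₁ V₂ hmem
    have h2 := ip_cdc (n₁ := n₁) V₁ V₂ hZsMem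
    have e1 : ip (G - Gbar n n₁ n₁ p γ V₁ V₂) (Zhat - Zstar n n₁) =
        (ip G Zhat - ip G (Zstar n n₁)) -
          (ip (Rmat n n₁ n₁ p γ) Zhat - ip (Rmat n n₁ n₁ p γ) (Zstar n n₁)) := by
      rw [show Gbar n n₁ n₁ p γ V₁ V₂ =
        centering n * Dmat n n₁ V₁ V₂ * centering n + Rmat n n₁ n₁ p γ from rfl,
        ip_sub_left, ip_add_left, ip_sub_right, ip_sub_right, ip_sub_right,
        h1, h2]
      ring
    rw [e1, ip_sub_right]
    linarith


end
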